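/- Let C = (C₁, C₂, C₃) : ℝ × ℝ → ℝ³ be twice continuously differentiable with C₃ ≡ 0, let x₀ ∈ ℝ satisfy ∂ₓC₁(0, x₀) ≠ 0, and let n⁰ ∈ ℝ³ be a vector whose third component n⁰₃ is nonzero. Suppose n : ℝ × ℝ → ℝ³ is twice continuously differentiable and for each parameter x solves the Landau–Lifshitz equation ∂ₜ n(t,x) = C(t,x) × n(t,x) (cross product in ℝ³) with the x-independent initial condition n(0,x) = n⁰. Then there exist c₀ > 0, t₀ > 0 and r₀ > 0 such that |n(t,x) − n(t,y)| ≥ c₀·t·|x − y| whenever |x − x₀| + |y − x₀| ≤ r₀ and 0 ≤ t ≤ t₀. -/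

import Mathlib

/-- The cross product on `ℝ³` realized on `EuclideanSpace ℝ (Fin 3)`. -/
noncomputable def cross3 (u v : EuclideanSpace ℝ (Fin 3)) : EuclideanSpace ℝ (Fin 3) :=
  (WithLp.equiv 2 (Fin 3 → ℝ)).symm
    (crossProduct ((WithLp.equiv 2 (Fin 3 → ℝ)) u) ((WithLp.equiv 2 (Fin 3 → ℝ)) v))

lemma abs_coord_le_norm (u : EuclideanSpace ℝ (Fin 3)) (i : Fin 3) : |u i| ≤ ‖u‖ := by
  rw [EuclideanSpace.norm_eq]
  have h : |u i|^2 ≤ ∑ j, ‖u j‖^2 := by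
    rw [sq_abs]
    calc (u i)^2 = ‖u i‖^2 := by rw [Real.norm_eq_abs, sq_abs]
    _ ≤ _ := Finset.single_le_sum (f := fun j => ‖u j‖^2) (fun j _ => by positivity)
        (Finset.mem_univ i)
  calc |u i| = Real.sqrt (|u i|^2) := (Real.sqrt_sq (abs_nonneg _)).symm
  _ ≤ _ := Real.sqrt_le_sqrt h

/-- Separation of solutions of the parameter-dependent Landau–Lifshitz equation
`∂ₜ n(t,x) = C(t,x) × n(t,x)` with `C₃ ≡ 0`, `∂ₓC₁(0,x₀) ≠ 0` and `n⁰₃ ≠ 0`. -/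
theorem stmt_2
    (C : ℝ × ℝ → EuclideanSpace ℝ (Fin 3)) (hC : ContDiff ℝ 2 C)
    (hC3 : ∀ t x : ℝ, C (t, x) 2 = 0)
    (x₀ : ℝ) (hC1 : deriv (fun x => C (0, x) 0) x₀ ≠ 0)
    (n₀ : EuclideanSpace ℝ (Fin 3)) (hn₀3 : n₀ 2 ≠ 0)
    (n : ℝ × ℝ → EuclideanSpace ℝ (Fin 3)) (hn : ContDiff ℝ 2 n)
    (hLL : ∀ t x : ℝ, HasDerivAt (fun s => n (s, x)) (cross3 (C (t, x)) (n (t, x))) t)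
    (hinit : ∀ x : ℝ, n (0, x) = n₀) :
    ∃ c₀ > (0:ℝ), ∃ t₀ > (0:ℝ), ∃ r₀ > (0:ℝ), ∀ t x y : ℝ,
      |x - x₀| + |y - x₀| ≤ r₀ → 0 ≤ t → t ≤ t₀ →
        c₀ * t * |x - y| ≤ ‖n (t, x) - n (t, y)‖ := by
  classical
  set P : ℝ × ℝ → ℝ := fun p => -(C p 0 * n p 2) with hPdef
  have hP : ContDiff ℝ 2 P := by
    have h1 : ContDiff ℝ 2 fun p : ℝ × ℝ => C p 0 :=
      contDiff_euclidean.mp hC 0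
    have h2 : ContDiff ℝ 2 fun p : ℝ × ℝ => n p 2 :=
      contDiff_euclidean.mp hn 2
    exact (h1.mul h2).neg
  -- time derivative of the second component
  have hFt : ∀ t x : ℝ, HasDerivAt (fun s => n (s, x) 1) (P (t, x)) t := by
    intro t x
    have h1 := (EuclideanSpace.proj (1 : Fin 3)).hasFDerivAt.comp_hasDerivAt t (hLL t x)
    have h2 : (EuclideanSpace.proj (1 : Fin 3)) (cross3 (C (t,x)) (n (t,x))) = P (t,x) := by
      simp [cross3, cross_apply, hC3, hPdef]
    rwa [h2] at h1
  -- spatial derivative of P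
  set Q : ℝ × ℝ → ℝ := fun p => fderiv ℝ P p (0, 1) with hQdef
  have hQcont : Continuous Q :=
    (hP.continuous_fderiv (by norm_num)).clm_apply continuous_const
  have hQx : ∀ t x : ℝ, HasDerivAt (fun u => P (t, u)) (Q (t, x)) x := by
    intro t x
    have hdP : HasFDerivAt P (fderiv ℝ P (t, x)) (t, x) :=
      (hP.differentiable (by norm_num) (t, x)).hasFDerivAt
    exact hdP.comp_hasDerivAt x ((hasDerivAt_const x t).prodMk (hasDerivAt_id x))
  -- value of Q at (0, x₀)
  have hCdiff : Differentiable ℝ (fun u : ℝ => C (0, u) 0) := by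
    have h1 : ContDiff ℝ 2 fun p : ℝ × ℝ => C p 0 :=
      contDiff_euclidean.mp hC 0
    have : Differentiable ℝ (fun p : ℝ × ℝ => C p 0) := h1.differentiable (by norm_num)
    exact this.comp (differentiable_const _ |>.prodMk differentiable_id)
  have hQ0 : Q (0, x₀) = -(deriv (fun u : ℝ => C (0, u) 0) x₀ * n₀ 2) := by
    have hg : HasDerivAt (fun u : ℝ => C (0, u) 0)
        (deriv (fun u : ℝ => C (0, u) 0) x₀) x₀ := (hCdiff x₀).hasDerivAt
    have h2 : HasDerivAt (fun u : ℝ => -(C (0, u) 0 * n₀ 2))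
        (-(deriv (fun u : ℝ => C (0, u) 0) x₀ * n₀ 2)) x₀ := (hg.mul_const _).neg
    have h3 : HasDerivAt (fun u : ℝ => P (0, u))
        (-(deriv (fun u : ℝ => C (0, u) 0) x₀ * n₀ 2)) x₀ := by
      refine h2.congr_of_eventuallyEq (Filter.Eventually.of_forall fun u => ?_)
      simp [hPdef, hinit u]
    exact (hQx 0 x₀).unique h3
  set c : ℝ := |Q (0, x₀)| with hcdef
  have hc : 0 < c := by
    rw [hcdef, hQ0]
    exact abs_pos.mpr (neg_ne_zero.mpr (mul_ne_zero hC1 hn₀3))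
  -- sign
  obtain ⟨e, he, heQ⟩ : ∃ e : ℝ, |e| = 1 ∧ e * Q (0, x₀) = c := by
    rcases le_or_gt 0 (Q (0, x₀)) with h | h
    · exact ⟨1, abs_one, by rw [one_mul, hcdef, abs_of_nonneg h]⟩
    · exact ⟨-1, by norm_num, by rw [neg_one_mul, hcdef, abs_of_neg h]⟩
  -- continuity neighborhood
  obtain ⟨δ, hδ, hball⟩ : ∃ δ > (0:ℝ), ∀ p : ℝ × ℝ, dist p (0, x₀) < δ →
      |Q p - Q (0, x₀)| < c / 2 := by
    have := Metric.continuousAt_iff.mp (hQcont.continuousAt (x := ((0:ℝ), x₀)))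
    obtain ⟨δ, hδ, h⟩ := this (c / 2) (by linarith)
    exact ⟨δ, hδ, fun p hp => by simpa [Real.dist_eq] using h hp⟩
  have hQlow : ∀ p : ℝ × ℝ, dist p (0, x₀) < δ → c / 2 ≤ e * Q p := by
    intro p hp
    have h1 : |e * (Q p - Q (0, x₀))| ≤ c / 2 := by
      rw [abs_mul, he, one_mul]; exact le_of_lt (hball p hp)
    have h2 := neg_abs_le (e * (Q p - Q (0, x₀)))
    have h3 : e * (Q p - Q (0, x₀)) = e * Q p - e * Q (0, x₀) := mul_sub _ _ _
    linarith
  refine ⟨c / 2, by linarith, δ / 2, by linarith, δ / 2, by linarith, ?_⟩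
  -- key claim for ordered x, y
  have key : ∀ t x y : ℝ, |x - x₀| + |y - x₀| ≤ δ / 2 → 0 ≤ t → t ≤ δ / 2 → y ≤ x →
      c / 2 * t * (x - y) ≤ ‖n (t, x) - n (t, y)‖ := by
    intro t x y hr ht0 ht1 hyx
    have hxr : |x - x₀| ≤ δ / 2 := le_trans (le_add_of_nonneg_right (abs_nonneg _)) hr
    have hyr : |y - x₀| ≤ δ / 2 := le_trans (le_add_of_nonneg_left (abs_nonneg _)) hr
    -- membership of space points
    have hmem : ∀ s u : ℝ, s ∈ Set.Icc 0 t → u ∈ Set.Icc y x → dist ((s, u) : ℝ × ℝ) (0, x₀) < δ := by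
      intro s u hs hu
      rw [Prod.dist_eq]
      have hs' : |s| ≤ δ / 2 := by
        rw [abs_of_nonneg hs.1]; exact le_trans hs.2 ht1
      have hu' : |u - x₀| ≤ δ / 2 := by
        rw [abs_le]
        constructor
        · have := neg_abs_le (y - x₀)
          have := hu.1
          linarith [abs_le.mp hyr]
        · have := hu.2
          linarith [abs_le.mp hxr, le_abs_self (x - x₀)]
      have : max |s| |u - x₀| ≤ δ / 2 := max_le hs' hu'
      calc max (dist s 0) (dist u x₀) = max |s| |u - x₀| := by rw [Real.dist_eq, Real.dist_eq, sub_zero]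
      _ ≤ δ / 2 := this
      _ < δ := by linarith
    -- P difference bound for each s ∈ [0, t]
    have hPbound : ∀ s ∈ Set.Icc (0:ℝ) t, c / 2 * (x - y) ≤ e * (P (s, x) - P (s, y)) := by
      intro s hs
      have hQcont' : Continuous fun u => Q (s, u) :=
        hQcont.comp (continuous_const.prodMk continuous_id)
      have hftc : ∫ u in y..x, Q (s, u) = P (s, x) - P (s, y) :=
        intervalIntegral.integral_eq_sub_of_hasDerivAt
          (fun u _ => hQx s u) (hQcont'.intervalIntegrable y x)
      have hmono : (∫ u in y..x, (c / 2 : ℝ)) ≤ ∫ u in y..x, e * Q (s, u) := by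
        refine intervalIntegral.integral_mono_on hyx
          (intervalIntegrable_const) ((continuous_const.mul hQcont').intervalIntegrable y x)
          fun u hu => ?_
        exact hQlow (s, u) (hmem s u hs hu)
      rw [intervalIntegral.integral_const, smul_eq_mul] at hmono
      rw [← hftc, ← intervalIntegral.integral_const_mul]
      calc c / 2 * (x - y) = (x - y) * (c / 2) := by ring
      _ ≤ _ := hmono
    -- FTC in time
    have hFx : ∀ z : ℝ, (∫ s in (0:ℝ)..t, P (s, z)) = n (t, z) 1 - n (0, z) 1 := by
      intro z
      refine intervalIntegral.integral_eq_sub_of_hasDerivAt (fun s _ => hFt s z) ?_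
      exact ((hP.continuous).comp (continuous_id.prodMk continuous_const)).intervalIntegrable 0 t
    have hdiffeq : n (t, x) 1 - n (t, y) 1 = ∫ s in (0:ℝ)..t, (P (s, x) - P (s, y)) := by
      have hint1 : IntervalIntegrable (fun s => P (s, x)) MeasureTheory.volume 0 t :=
        ((hP.continuous).comp (continuous_id.prodMk continuous_const)).intervalIntegrable 0 t
      have hint2 : IntervalIntegrable (fun s => P (s, y)) MeasureTheory.volume 0 t :=
        ((hP.continuous).comp (continuous_id.prodMk continuous_const)).intervalIntegrable 0 t
      rw [intervalIntegral.integral_sub hint1 hint2, hFx x, hFx y, hinit x, hinit y]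
      ring
    have hmono2 : (∫ s in (0:ℝ)..t, c / 2 * (x - y)) ≤
        ∫ s in (0:ℝ)..t, e * (P (s, x) - P (s, y)) := by
      refine intervalIntegral.integral_mono_on ht0 intervalIntegrable_const ?_ hPbound
      have : Continuous fun s => P (s, x) - P (s, y) :=
        ((hP.continuous).comp (continuous_id.prodMk continuous_const)).sub
          ((hP.continuous).comp (continuous_id.prodMk continuous_const))
      exact (continuous_const.mul this).intervalIntegrable 0 t
    rw [intervalIntegral.integral_const, smul_eq_mul, sub_zero] at hmono2
    rw [intervalIntegral.integral_const_mul, ← hdiffeq] at hmono2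
    have habs : e * (n (t, x) 1 - n (t, y) 1) ≤ |n (t, x) 1 - n (t, y) 1| := by
      calc e * (n (t, x) 1 - n (t, y) 1) ≤ |e * (n (t, x) 1 - n (t, y) 1)| := le_abs_self _
      _ = |n (t, x) 1 - n (t, y) 1| := by rw [abs_mul, he, one_mul]
    have hcoord : |n (t, x) 1 - n (t, y) 1| ≤ ‖n (t, x) - n (t, y)‖ := by
      have := abs_coord_le_norm (n (t, x) - n (t, y)) 1
      simpa using this
    calc c / 2 * t * (x - y) = t * (c / 2 * (x - y)) := by ring
    _ ≤ e * (n (t, x) 1 - n (t, y) 1) := hmono2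
    _ ≤ ‖n (t, x) - n (t, y)‖ := le_trans habs hcoord
  -- conclude, removing the order assumption
  intro t x y hr ht0 ht1
  rcases le_total y x with hxy | hxy
  · have := key t x y hr ht0 ht1 hxy
    rwa [abs_of_nonneg (by linarith : (0:ℝ) ≤ x - y)]
  · have := key t y x (by linarith [hr, add_comm (|x - x₀|) (|y - x₀|)]) ht0 ht1 hxy
    rw [abs_sub_comm, norm_sub_rev]
    rwa [abs_of_nonneg (by linarith : (0:ℝ) ≤ y - x)]
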